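/- Let c_i ∈ ℝ^d and G_i ∈ ℝ^{d×D_i} for i = 1, …, n with n ≥ 2, set D̄ = 1 + Σ_{i=1}^{n−1} D_i and V = [I_{D̄} −I_{D̄}] ∈ ℝ^{D̄×2D̄}. The following two conditions are equivalent: (a) there exist matrices Γ_i ∈ ℝ^{D_n×D_i} for i = 1, …, n−1 and a vector γ ∈ ℝ^{D_n} such that G_i = G_n Γ_i for every i, Σ_{i=1}^{n−1} c_i = c_n + G_n γ, and Σ_{i=1}^{n−1} |Γ_i| 1_{D_i} + |γ| ≤ 1_{D_n} componentwise; (b) there exists Φ ∈ ℝ^{2D̄×D_n} with Φ ≥ 0 entrywise, Φᵀ 1_{2D̄} ≤ 1_{D_n} componentwise, and G_n Φᵀ Vᵀ = [ (Σ_{i=1}^{n−1} c_i − c_n) G_1 ⋯ G_{n−1} ], where the right-hand side is the d×D̄ matrix whose first column is Σ_{i=1}^{n−1} c_i − c_n followed by the blocks G_1, …, G_{n−1}. -/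

import Mathlib

open Matrix Pointwise BigOperators

lemma key' {α β : Type*} [Fintype α] [DecidableEq α] [Fintype β]
    (Φ : Matrix (α ⊕ α) β ℝ) :
    Φᵀ * (Matrix.fromCols (1 : Matrix α α ℝ) (-1))ᵀ
      = (Matrix.of fun a j => Φ (Sum.inl a) j - Φ (Sum.inr a) j)ᵀ := by
  ext j a
  erw [Matrix.mul_apply]
  simp [Matrix.mul_apply, Fintype.sum_sum_type, Matrix.one_apply, mul_ite,
    Finset.sum_ite_eq', sub_eq_add_neg]

lemma pm_sub (x : ℝ) : max x 0 - max (-x) 0 = x := by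
  rcases le_total x 0 with h | h
  · rw [max_eq_right h, max_eq_left (by linarith)]; ring
  · rw [max_eq_left h, max_eq_right (by linarith)]; ring

lemma pm_add (x : ℝ) : max x 0 + max (-x) 0 = |x| := by
  rcases le_total x 0 with h | h
  · rw [max_eq_right h, max_eq_left (by linarith), abs_of_nonpos h]; ring
  · rw [max_eq_left h, max_eq_right (by linarith), abs_of_nonneg h]; ring


/-- Proposition 2: equivalence of the `(Γ, γ)` zonotope-inclusion certificate with the
`Φ` (cross-polytope vertex) certificate.  The `D̄ = 1 + ∑ Dᵢ` columns of the block matrix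
`[ (∑ cᵢ − cₙ)  G₁ ⋯ G_{n−1} ]` are indexed by `Unit ⊕ (Σ i, Fin (Di i))` and
`V = [I −I]` is `Matrix.fromColumns 1 (-1)`. -/
theorem zonotope_inclusion_cert_equiv
    {v m : ℕ} (hm : 1 ≤ m)  -- `m = n - 1`, so `n ≥ 2`
    {Dn : ℕ} {Di : Fin m → ℕ}
    (c : ∀ _ : Fin m, Fin v → ℝ) (G : ∀ i : Fin m, Matrix (Fin v) (Fin (Di i)) ℝ)
    (cn : Fin v → ℝ) (Gn : Matrix (Fin v) (Fin Dn) ℝ) :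
    (∃ (Γ : ∀ i : Fin m, Matrix (Fin Dn) (Fin (Di i)) ℝ) (γ : Fin Dn → ℝ),
        (∀ i, G i = Gn * Γ i) ∧
        (∑ i, c i) = cn + Gn.mulVec γ ∧
        (∀ j, (∑ i, ∑ k, |Γ i j k|) + |γ j| ≤ 1))
    ↔
    (∃ Φ : Matrix ((Unit ⊕ (Σ i : Fin m, Fin (Di i))) ⊕ (Unit ⊕ (Σ i : Fin m, Fin (Di i))))
        (Fin Dn) ℝ,
        (∀ r j, 0 ≤ Φ r j) ∧
        (∀ j, ∑ r, Φ r j ≤ 1) ∧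
        Gn * (Φᵀ * (Matrix.fromCols (1 : Matrix (Unit ⊕ (Σ i : Fin m, Fin (Di i)))
            (Unit ⊕ (Σ i : Fin m, Fin (Di i))) ℝ) (-1))ᵀ :
            Matrix (Fin Dn) (Unit ⊕ (Σ i : Fin m, Fin (Di i))) ℝ)
          = Matrix.of fun r j =>
              Sum.elim (fun _ : Unit => (∑ i, c i r) - cn r) (fun ik : (Σ i : Fin m, Fin (Di i)) => G ik.1 r ik.2) j) := by
  constructor
  · rintro ⟨Γ, γ, hG, hc, hbd⟩
    set M : Matrix (Unit ⊕ (Σ i : Fin m, Fin (Di i))) (Fin Dn) ℝ :=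
      fun a j => Sum.elim (fun _ : Unit => γ j) (fun ik => Γ ik.1 j ik.2) a with hM
    refine ⟨fun r j => Sum.elim (fun a => max (M a j) 0) (fun a => max (-(M a j)) 0) r,
      ?_, ?_, ?_⟩
    · rintro (a|a) j <;> simp [le_max_right]
    · intro j
      rw [Fintype.sum_sum_type]
      simp only [Sum.elim_inl, Sum.elim_inr]
      rw [← Finset.sum_add_distrib]
      simp_rw [pm_add]
      rw [Fintype.sum_sum_type]
      have h2 : ∑ a : (Σ i : Fin m, Fin (Di i)), |M (Sum.inr a) j|
          = ∑ i, ∑ k, |Γ i j k| := by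
        rw [← Finset.univ_sigma_univ, Finset.sum_sigma]; rfl
      have h3 : ∑ a : Unit, |M (Sum.inl a) j| = |γ j| := by
                simp [hM]
      rw [h2, h3]
      linarith [hbd j]
    · erw [key']
      ext r a
      simp only [Matrix.mul_apply, Matrix.transpose_apply, Matrix.of_apply, hM,
        Sum.elim_inl, Sum.elim_inr, pm_sub]
      rcases a with a | ⟨i, k⟩
      · simp only [Sum.elim_inl]
        have := congrFun hc r
        simp only [Pi.add_apply, Matrix.mulVec, dotProduct, Finset.sum_apply] at this
        linarith
      · simp only [Sum.elim_inr]
        rw [hG i]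
        simp [Matrix.mul_apply]
  · rintro ⟨Φ, hpos, hsum, heq⟩
    rw [key'] at heq
    set N : Matrix (Unit ⊕ (Σ i : Fin m, Fin (Di i))) (Fin Dn) ℝ :=
      fun a j => Φ (Sum.inl a) j - Φ (Sum.inr a) j with hN
    refine ⟨fun i => fun j k => N (Sum.inr ⟨i, k⟩) j, fun j => N (Sum.inl ()) j, ?_, ?_, ?_⟩
    · intro i
      ext r k
      have := congrFun (congrFun heq r) (Sum.inr ⟨i, k⟩)
      simp only [Matrix.mul_apply, Matrix.transpose_apply, Matrix.of_apply,
        Sum.elim_inr] at this ⊢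
      exact this.symm
    · funext r
      have := congrFun (congrFun heq r) (Sum.inl ())
      simp only [Matrix.mul_apply, Matrix.transpose_apply, Matrix.of_apply,
        Sum.elim_inl] at this
      simp only [Pi.add_apply, Matrix.mulVec, dotProduct, Finset.sum_apply]
      change ∑ j, Gn r j * N (Sum.inl ()) j = _ at this
      linarith
    · intro j
      have hle : ∀ a : Unit ⊕ (Σ i : Fin m, Fin (Di i)),
          |N a j| ≤ Φ (Sum.inl a) j + Φ (Sum.inr a) j := by
        intro a
        calc |N a j| ≤ |Φ (Sum.inl a) j| + |Φ (Sum.inr a) j| := abs_sub _ _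
          _ = Φ (Sum.inl a) j + Φ (Sum.inr a) j := by
              rw [abs_of_nonneg (hpos _ _), abs_of_nonneg (hpos _ _)]
      have key2 : ∑ a : Unit ⊕ (Σ i : Fin m, Fin (Di i)), |N a j| ≤ 1 := by
        calc ∑ a, |N a j| ≤ ∑ a, (Φ (Sum.inl a) j + Φ (Sum.inr a) j) :=
              Finset.sum_le_sum fun a _ => hle a
          _ = ∑ r, Φ r j := by
              rw [Finset.sum_add_distrib]
              conv_rhs => rw [Fintype.sum_sum_type]
          _ ≤ 1 := hsum j
      rw [Fintype.sum_sum_type] at key2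
      have h2 : ∑ a : (Σ i : Fin m, Fin (Di i)), |N (Sum.inr a) j|
          = ∑ i, ∑ k, |N (Sum.inr ⟨i, k⟩) j| := by
        rw [← Finset.univ_sigma_univ, Finset.sum_sigma]
      have h3 : ∑ a : Unit, |N (Sum.inl a) j| = |N (Sum.inl ()) j| := by simp
      rw [h2, h3] at key2
      linarith
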